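/- For every integer m ≥ 1, ψ(4m−1) = ψ(4m+1). -/

import Mathlib

/-- Moser function `m_r(n)`: reinterpret the base-`r` digits of `n` as base-`r²` digits,
i.e. `m_r(n) = Σ_i ν_i r^(2i)` where `n = Σ_i ν_i r^i` is the base-`r` expansion. -/
def moser (r n : ℕ) : ℕ := Nat.ofDigits (r ^ 2) (Nat.digits r n)

/-- `s^(r)_n = r · m_r(n−1) + 1` for `n ≥ 1`. -/
def moserS (r n : ℕ) : ℕ := r * moser r (n - 1) + 1

/-- The `i`-th base-`r` digit of `n` (0 if beyond the expansion). -/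
def dig (r n i : ℕ) : ℕ := (Nat.digits r n).getD i 0

/-- Josephus–Groër survivor function: with `M = N` if `N` is odd, `M = N − 1` otherwise,
and `M = Σ_j b_j 2^j` the binary expansion, `W(N) = 1 + Σ_{j odd} b_j 2^j`. -/
def W (N : ℕ) : ℕ :=
  let M := if N % 2 = 1 then N else N - 1
  1 + ((((List.range (Nat.digits 2 M).length).zip (Nat.digits 2 M)).filter (fun p => p.1 % 2 = 1)).map (fun p => p.2 * 2 ^ p.1)).sum

/-- Two integers `M, N > 1` are collinear if in their (unique) decompositions
`· = s^(2)_k + 2·s^(2)_l` (with `k, l ≥ 1`) they share the first or the second index;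
`1` is collinear to nothing. -/
def MoserCollinear (M N : ℕ) : Prop :=
  1 < M ∧ 1 < N ∧ ∃ k l k' l' : ℕ, 1 ≤ k ∧ 1 ≤ l ∧ 1 ≤ k' ∧ 1 ≤ l' ∧
    M = moserS 2 k + 2 * moserS 2 l ∧ N = moserS 2 k' + 2 * moserS 2 l' ∧
    (k = k' ∨ l = l')

open scoped Classical in
/-- `ψ(n)` counts the odd integers `i` with `1 ≤ i < n` that are not collinear to `n`. -/
noncomputable def psi (n : ℕ) : ℕ :=
  ((Finset.Ico 1 n).filter (fun i => Odd i ∧ ¬ MoserCollinear i n)).card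

lemma moser2_rec (n : ℕ) : moser 2 n = n % 2 + 4 * moser 2 (n / 2) := by
  rcases Nat.eq_zero_or_pos n with rfl | h
  · simp [moser]
  · unfold moser
    rw [Nat.digits_def' (by norm_num : 1 < 2) h, Nat.ofDigits_cons]
    norm_num

lemma le_moser2 (n : ℕ) : n ≤ moser 2 n := by
  induction n using Nat.strong_induction_on with
  | _ n ih =>
    rcases Nat.eq_zero_or_pos n with rfl | h
    · simp [moser]
    · have h1 := moser2_rec n
      have h2 := ih (n / 2) (by omega)
      omega

lemma moser2_strictMono : ∀ k j : ℕ, j < k → moser 2 j < moser 2 k := by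
  intro k
  induction k using Nat.strong_induction_on with
  | _ k ih =>
    intro j hjk
    have rj := moser2_rec j
    have rk := moser2_rec k
    rcases Nat.lt_or_ge (j / 2) (k / 2) with h | h
    · have := ih (k / 2) (by omega) (j / 2) h
      omega
    · have e : j / 2 = k / 2 := by omega
      rw [e] at rj
      omega

lemma moser2_lt_iff {j k : ℕ} : moser 2 j < moser 2 k ↔ j < k := by
  constructor
  · intro h
    by_contra hc
    rcases Nat.lt_or_ge k j with h' | h'
    · have := moser2_strictMono j k h'
      omega
    · have e : j = k := by omega
      rw [e] at h
      omega
  · exact moser2_strictMono k j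

/-- interleaving pairing -/
def G (j j' : ℕ) : ℕ := moser 2 j + 2 * moser 2 j'

lemma G_rec (j j' : ℕ) : G j j' = j % 2 + 2 * (j' % 2) + 4 * G (j / 2) (j' / 2) := by
  unfold G
  rw [moser2_rec j, moser2_rec j']
  ring

lemma G_inj : ∀ v j1 j1' j2 j2' : ℕ, G j1 j1' = v → G j2 j2' = v →
    j1 = j2 ∧ j1' = j2' := by
  intro v
  induction v using Nat.strong_induction_on with
  | _ v ih =>
    intro j1 j1' j2 j2' h1 h2
    rcases Nat.eq_zero_or_pos v with rfl | hv
    · have a1 := le_moser2 j1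
      have a2 := le_moser2 j1'
      have a3 := le_moser2 j2
      have a4 := le_moser2 j2'
      unfold G at h1 h2
      omega
    · have r1 := G_rec j1 j1'
      have r2 := G_rec j2 j2'
      have hd : G (j1 / 2) (j1' / 2) = v / 4 := by omega
      have hd2 : G (j2 / 2) (j2' / 2) = v / 4 := by omega
      have key := ih (v / 4) (by omega) (j1 / 2) (j1' / 2) (j2 / 2) (j2' / 2) hd hd2
      omega

lemma G_inj' {a b c d : ℕ} (h : G a b = G c d) : a = c ∧ b = d :=
  G_inj (G c d) a b c d h rfl

lemma G_surj : ∀ x : ℕ, ∃ j j', G j j' = x := by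
  intro x
  induction x using Nat.strong_induction_on with
  | _ x ih =>
    rcases Nat.eq_zero_or_pos x with rfl | hx
    · exact ⟨0, 0, by simp [G, moser]⟩
    · obtain ⟨j, j', hjj⟩ := ih (x / 4) (by omega)
      refine ⟨x % 2 + 2 * j, (x / 2) % 2 + 2 * j', ?_⟩
      rw [G_rec]
      have e1 : (x % 2 + 2 * j) % 2 = x % 2 := by omega
      have e2 : (x % 2 + 2 * j) / 2 = j := by omega
      have e3 : ((x / 2) % 2 + 2 * j') % 2 = (x / 2) % 2 := by omega
      have e4 : ((x / 2) % 2 + 2 * j') / 2 = j' := by omega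
      rw [e1, e2, e3, e4, hjj]
      omega


lemma rep_eq (a b : ℕ) : moserS 2 (a + 1) + 2 * moserS 2 (b + 1) = 2 * G a b + 3 := by
  unfold moserS G
  simp only [Nat.add_sub_cancel]
  ring

lemma coll_iff (x j j' : ℕ) (hx : G j j' = x) (i : ℕ) :
    MoserCollinear i (2 * x + 3) ↔ ∃ a b, i = 2 * G a b + 3 ∧ (a = j ∨ b = j') := by
  constructor
  · rintro ⟨hi1, hn1, k, l, k', l', hk, hl, hk', hl', hieq, hneq, hor⟩
    obtain ⟨a, rfl⟩ : ∃ a, k = a + 1 := ⟨k - 1, by omega⟩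
    obtain ⟨b, rfl⟩ : ∃ b, l = b + 1 := ⟨l - 1, by omega⟩
    obtain ⟨c, rfl⟩ : ∃ c, k' = c + 1 := ⟨k' - 1, by omega⟩
    obtain ⟨d, rfl⟩ : ∃ d, l' = d + 1 := ⟨l' - 1, by omega⟩
    rw [rep_eq] at hieq hneq
    have hcd : G c d = x := by omega
    obtain ⟨rfl, rfl⟩ := G_inj' (hcd.trans hx.symm)
    exact ⟨a, b, hieq, by omega⟩
  · rintro ⟨a, b, rfl, hor⟩
    refine ⟨by omega, by omega, a + 1, b + 1, j + 1, j' + 1, by omega, by omega,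
      by omega, by omega, (rep_eq a b).symm, ?_, by omega⟩
    rw [rep_eq, hx]

open scoped Classical in
lemma coll_card (x j j' : ℕ) (hx : G j j' = x) :
    ((Finset.Ico 1 (2 * x + 3)).filter (fun i => MoserCollinear i (2 * x + 3))).card
      = j + j' := by
  have hset : ((Finset.Ico 1 (2 * x + 3)).filter (fun i => MoserCollinear i (2 * x + 3)))
      = (Finset.range j').image (fun b => 2 * G j b + 3)
        ∪ (Finset.range j).image (fun a => 2 * G a j' + 3) := by
    ext i
    simp only [Finset.mem_filter, Finset.mem_Ico, Finset.mem_union, Finset.mem_image,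
      Finset.mem_range]
    constructor
    · rintro ⟨⟨h1, h2⟩, hcoll⟩
      obtain ⟨a, b, rfl, hor⟩ := (coll_iff x j j' hx _).1 hcoll
      have hlt : G a b < x := by omega
      rw [← hx] at hlt
      rcases hor with rfl | rfl
      · left
        refine ⟨b, ?_, rfl⟩
        have : moser 2 b < moser 2 j' := by unfold G at hlt; omega
        exact moser2_lt_iff.1 this
      · right
        refine ⟨a, ?_, rfl⟩
        have : moser 2 a < moser 2 j := by unfold G at hlt; omega
        exact moser2_lt_iff.1 this
    · rintro (⟨b, hb, rfl⟩ | ⟨a, ha, rfl⟩)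
      · have hlt : G j b < x := by
          rw [← hx]
          have := moser2_strictMono j' b hb
          unfold G
          omega
        exact ⟨⟨by omega, by omega⟩, (coll_iff x j j' hx _).2 ⟨j, b, rfl, Or.inl rfl⟩⟩
      · have hlt : G a j' < x := by
          rw [← hx]
          have := moser2_strictMono j a ha
          unfold G
          omega
        exact ⟨⟨by omega, by omega⟩, (coll_iff x j j' hx _).2 ⟨a, j', rfl, Or.inr rfl⟩⟩
  have hinj1 : Function.Injective (fun b => 2 * G j b + 3) := by
    intro b1 b2 h
    simp only at h
    have : G j b1 = G j b2 := by omega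
    exact (G_inj' this).2
  have hinj2 : Function.Injective (fun a => 2 * G a j' + 3) := by
    intro a1 a2 h
    simp only at h
    have : G a1 j' = G a2 j' := by omega
    exact (G_inj' this).1
  have hdisj : Disjoint ((Finset.range j').image (fun b => 2 * G j b + 3))
      ((Finset.range j).image (fun a => 2 * G a j' + 3)) := by
    rw [Finset.disjoint_left]
    rintro i hi1 hi2
    simp only [Finset.mem_image, Finset.mem_range] at hi1 hi2
    obtain ⟨b, hb, rfl⟩ := hi1
    obtain ⟨a, ha, he⟩ := hi2
    have : G a j' = G j b := by omega
    have := (G_inj' this).1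
    omega
  rw [hset, Finset.card_union_of_disjoint hdisj,
    Finset.card_image_of_injective _ hinj1, Finset.card_image_of_injective _ hinj2,
    Finset.card_range, Finset.card_range]
  omega

open scoped Classical in
lemma odd_card (x : ℕ) :
    ((Finset.Ico 1 (2 * x + 3)).filter (fun i => Odd i)).card = x + 1 := by
  have hset : ((Finset.Ico 1 (2 * x + 3)).filter (fun i => Odd i))
      = (Finset.range (x + 1)).image (fun t => 2 * t + 1) := by
    ext i
    simp only [Finset.mem_filter, Finset.mem_Ico, Finset.mem_image, Finset.mem_range,
      Nat.odd_iff]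
    constructor
    · rintro ⟨⟨h1, h2⟩, h3⟩
      exact ⟨i / 2, by omega, by omega⟩
    · rintro ⟨t, ht, rfl⟩
      omega
  rw [hset, Finset.card_image_of_injective _ (fun a b h => by omega), Finset.card_range]

open scoped Classical in
lemma psi_formula (x j j' : ℕ) (hx : G j j' = x) :
    psi (2 * x + 3) = (x + 1) - (j + j') := by
  unfold psi
  have hsub : ((Finset.Ico 1 (2 * x + 3)).filter (fun i => MoserCollinear i (2 * x + 3)))
      ⊆ ((Finset.Ico 1 (2 * x + 3)).filter (fun i => Odd i)) := by
    intro i hi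
    simp only [Finset.mem_filter] at hi ⊢
    obtain ⟨a, b, rfl, -⟩ := (coll_iff x j j' hx _).1 hi.2
    exact ⟨hi.1, by rw [Nat.odd_iff]; omega⟩
  have hsplit : ((Finset.Ico 1 (2 * x + 3)).filter
        (fun i => Odd i ∧ ¬ MoserCollinear i (2 * x + 3)))
      = ((Finset.Ico 1 (2 * x + 3)).filter (fun i => Odd i))
        \ ((Finset.Ico 1 (2 * x + 3)).filter (fun i => MoserCollinear i (2 * x + 3))) := by
    ext i
    simp only [Finset.mem_filter, Finset.mem_sdiff]
    tauto
  rw [hsplit, Finset.card_sdiff_of_subset hsub, odd_card, coll_card x j j' hx]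


/-- For every `m ≥ 1`, `ψ(4m−1) = ψ(4m+1)`. -/
theorem psi_eq (m : ℕ) (hm : 1 ≤ m) : psi (4 * m - 1) = psi (4 * m + 1) := by
  obtain ⟨j, j', hx⟩ := G_surj (2 * m - 2)
  have hmod : j % 2 = 0 := by
    have := G_rec j j'
    omega
  have hsucc : moser 2 (j + 1) = moser 2 j + 1 := by
    have r1 := moser2_rec j
    have r2 := moser2_rec (j + 1)
    have e : (j + 1) / 2 = j / 2 := by omega
    rw [e] at r2
    omega
  have hx' : G (j + 1) j' = 2 * m - 1 := by
    unfold G at hx ⊢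
    rw [hsucc]
    omega
  have e1 : 4 * m - 1 = 2 * (2 * m - 2) + 3 := by omega
  have e2 : 4 * m + 1 = 2 * (2 * m - 1) + 3 := by omega
  rw [e1, e2, psi_formula _ _ _ hx, psi_formula _ _ _ hx']
  omega
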